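/- arXiv:1407.5863 — 3 statements merged into one kernel-verified Lean document; each statement's English description precedes it below -/
import Mathlib

section
/- Let X be a complete metric space of diameter at most π/2 in which every pair of points lies on a closed geodesic of length π, and suppose X is a Riemannian manifold of sectional curvature ≥ 1. For p ∈ X define Ant(p) = {q ∈ X : d(p,q) ≥ π/2}. Then Ant(p) is a totally geodesic submanifold of X: it contains, together with any two of its distinct points, every geodesic of length < π joining them. -/
open Real

/-- A unit-speed local geodesic on the parameter interval `[a,b]`. -/
def IsLocalGeodesic {X : Type*} [MetricSpace X] (c : ℝ → X) (a b : ℝ) : Prop :=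
  ∀ t, a ≤ t → t ≤ b → ∃ ε > 0, ∀ s u, a ≤ s → u ≤ b →
    t - ε ≤ s → s ≤ u → u ≤ t + ε → dist (c s) (c u) = u - s

/-- A closed geodesic of length (period) `π`: a `π`-periodic curve which is a unit-speed
local geodesic around every parameter. -/
def IsClosedGeodesicPi {X : Type*} [MetricSpace X] (c : ℝ → X) : Prop :=
  (∀ t, c (t + π) = c t) ∧
  ∀ t : ℝ, ∃ ε > 0, ∀ s u, t - ε ≤ s → s ≤ u → u ≤ t + ε → dist (c s) (c u) = u - s

/-- Sectional curvature `≥ 1`, encoded by the spherical (Toponogov) distance comparison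
along unit-speed geodesics of length `< π`:
`cos d(p, c(t)) · sin L ≤ cos d(p, c(0)) · sin (L - t) + cos d(p, c(L)) · sin t`. -/
def CurvGeOne (X : Type*) [MetricSpace X] : Prop :=
  ∀ (p : X) (c : ℝ → X) (L : ℝ), 0 < L → L < π → IsLocalGeodesic c 0 L →
    ∀ t, 0 ≤ t → t ≤ L →
      Real.cos (dist p (c t)) * Real.sin L ≤
        Real.cos (dist p (c 0)) * Real.sin (L - t) + Real.cos (dist p (c L)) * Real.sin t

/-- Let `X` be a complete metric space of diameter at most `π/2` in which every pair of
points lies on a closed geodesic of length `π`, with curvature `≥ 1` (in the comparison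
sense).  For `p ∈ X` let `Ant p = {q : d(p,q) ≥ π/2}`.  Then `Ant p` contains, together
with any two of its points, every geodesic of length `< π` joining them; i.e. it is
totally geodesic in `X`. -/
theorem antipodal_set_totally_geodesic {X : Type*} [MetricSpace X] [CompleteSpace X]
    (hdiam : ∀ x y : X, dist x y ≤ π / 2)
    (hclosed : ∀ x y : X, ∃ c : ℝ → X, IsClosedGeodesicPi c ∧ (∃ s, c s = x) ∧ ∃ t, c t = y)
    (hcurv : CurvGeOne X)
    (p q₁ q₂ : X) (hq₁ : π / 2 ≤ dist p q₁) (hq₂ : π / 2 ≤ dist p q₂)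
    (c : ℝ → X) (L : ℝ) (h0 : 0 < L) (hL : L < π)
    (hc : IsLocalGeodesic c 0 L) (hc0 : c 0 = q₁) (hcL : c L = q₂) :
    ∀ t, 0 ≤ t → t ≤ L → π / 2 ≤ dist p (c t) := by
  intro t ht0 htL
  have h1 : dist p q₁ = π / 2 := le_antisymm (hdiam p q₁) hq₁
  have h2 : dist p q₂ = π / 2 := le_antisymm (hdiam p q₂) hq₂
  have hcomp := hcurv p c L h0 hL hc t ht0 htL
  rw [hc0, hcL, h1, h2, Real.cos_pi_div_two] at hcomp
  simp only [zero_mul, add_zero] at hcomp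
  have hsinL : 0 < Real.sin L := Real.sin_pos_of_pos_of_lt_pi h0 hL
  have hcos : Real.cos (dist p (c t)) ≤ 0 := by
    nlinarith
  by_contra h
  push_neg at h
  have : 0 < Real.cos (dist p (c t)) :=
    Real.cos_pos_of_mem_Ioo ⟨by have := dist_nonneg (x := p) (y := c t); linarith [Real.pi_pos], h⟩
  linarith
end

section
/- Let G = U(1) × Sp(n) (n ≥ 2) act on H^n ⊕ H^n by (z, A)·(u, v) = (A u z^r, A v z^s) where z ∈ U(1) acts by right scalar multiplication by the complex unit z taken to integer powers r and s, and A ∈ Sp(n) acts by quaternionic-linear left multiplication. If r ≠ ±s, then the slice representation at the point (u, 0) with u a unit vector, namely the action of the isotropy group on the normal space to the orbit, is non-polar; hence the representation is infinitesimally polar only if r = ±s. -/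
open Quaternion

noncomputable section

/-- A complex number viewed as a quaternion. -/
def czq (z : ℂ) : ℍ[ℝ] := ⟨z.re, z.im, 0, 0⟩

variable (n : ℕ) (r s : ℤ)

/-- The representation space `ℍⁿ ⊕ ℍⁿ`. -/
abbrev VV (n : ℕ) := (Fin n → ℍ[ℝ]) × (Fin n → ℍ[ℝ])

/-- The ambient parameter space for the group `U(1) × Sp(n)`. -/
abbrev AA (n : ℕ) := ℂ × Matrix (Fin n) (Fin n) ℍ[ℝ]

/-- Membership in the group `U(1) × Sp(n)` (`Sp(n)` as quaternionic unitary matrices). -/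
def inG (g : AA n) : Prop := ‖g.1‖ = 1 ∧ g.2 ∈ unitary (Matrix (Fin n) (Fin n) ℍ[ℝ])

/-- The action of `(z, A) ∈ U(1) × Sp(n)` on `ℍⁿ ⊕ ℍⁿ`:
`(z, A) · (u, v) = (A u z^r, A v z^s)`. -/
def act (g : AA n) (x : VV n) : VV n :=
  (fun i => g.2.mulVec x.1 i * czq (g.1 ^ r), fun i => g.2.mulVec x.2 i * czq (g.1 ^ s))

/-- The real inner product on `ℍⁿ ⊕ ℍⁿ`. -/
def ip (x y : VV n) : ℝ :=
  (∑ i, (star (x.1 i) * y.1 i).re) + ∑ i, (star (x.2 i) * y.2 i).re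

/-- The set of tangent vectors at `x` to the orbit of the subgroup cut out by `P`:
derivatives at `t = 0` of curves through the identity in the group, applied to `x`. -/
def orbitTangent (P : AA n → Prop) (x : VV n) : Set (VV n) :=
  {w | ∃ g : ℝ → AA n, (∀ t, P (g t)) ∧ g 0 = 1 ∧
    HasDerivAt (fun t => act n r s (g t) x) w 0}

/-- The isotropy condition at `p`. -/
def inIso (p : VV n) (g : AA n) : Prop := inG n g ∧ act n r s g p = p

/-- The normal space to the orbit of `G` at `p`. -/
def normalSet (p : VV n) : Set (VV n) :=
  {w | ∀ τ ∈ orbitTangent n r s (inG n) p, ip n w τ = 0}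

/-- Polarity of the slice representation at `p`: the isotropy group acts on the normal
space to the orbit, and there is a subspace `Sig` of the normal space meeting every
isotropy orbit in the normal space, orthogonally. -/
def SliceIsPolarAt (p : VV n) : Prop :=
  ∃ Sig : Submodule ℝ (VV n),
    (Sig : Set (VV n)) ⊆ normalSet n r s p ∧
    (∀ w ∈ normalSet n r s p, ∃ g, inIso n r s p g ∧ act n r s g w ∈ Sig) ∧
    (∀ σ ∈ Sig, ∀ w ∈ orbitTangent n r s (inIso n r s p) σ, ∀ τ ∈ Sig, ip n w τ = 0)

/-- Infinitesimal polarity: all slice representations at nonzero vectors are polar. -/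
def InfinitesimallyPolar : Prop := ∀ p : VV n, p ≠ 0 → SliceIsPolarAt n r s p

namespace NPaux

@[simp] lemma czq_re (z : ℂ) : (czq z).re = z.re := rfl
@[simp] lemma czq_imI (z : ℂ) : (czq z).imI = z.im := rfl
@[simp] lemma czq_imJ (z : ℂ) : (czq z).imJ = 0 := rfl
@[simp] lemma czq_imK (z : ℂ) : (czq z).imK = 0 := rfl

def qJ : ℍ[ℝ] := ⟨0,0,1,0⟩

@[simp] lemma qJ_re : qJ.re = 0 := rfl
@[simp] lemma qJ_imI : qJ.imI = 0 := rfl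
@[simp] lemma qJ_imJ : qJ.imJ = 1 := rfl
@[simp] lemma qJ_imK : qJ.imK = 0 := rfl

lemma czq_mul (z w : ℂ) : czq (z * w) = czq z * czq w := by
  ext <;> simp [Quaternion.re_mul, Quaternion.imI_mul, Quaternion.imJ_mul, Quaternion.imK_mul,
    Complex.mul_re, Complex.mul_im]

lemma czq_one : czq 1 = 1 := by ext <;> simp

lemma czq_zero : czq 0 = 0 := by ext <;> simp

lemma czq_star (z : ℂ) : star (czq z) = czq (starRingEnd ℂ z) := by
  ext <;> simp

lemma qJ_czq (z : ℂ) : qJ * czq z = czq (starRingEnd ℂ z) * qJ := by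
  ext <;> simp [qJ_re, qJ_imI, qJ_imJ, qJ_imK, Quaternion.re_mul, Quaternion.imI_mul, Quaternion.imJ_mul, Quaternion.imK_mul]

lemma cqJ (a b : ℂ) : czq a + czq b * qJ = (⟨a.re, a.im, b.re, b.im⟩ : ℍ[ℝ]) := by
  ext <;> simp [qJ_re, qJ_imI, qJ_imJ, qJ_imK, Quaternion.re_mul, Quaternion.imI_mul, Quaternion.imJ_mul, Quaternion.imK_mul]

lemma czq_real_mul_I (c : ℝ) : czq ((c : ℂ) * Complex.I) = c • czq Complex.I := by
  ext <;> simp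

lemma czq_unit {v : ℂ} (hv : ‖v‖ = 1) :
    star (czq v) * czq v = 1 ∧ czq v * star (czq v) = 1 := by
  have h1 : (starRingEnd ℂ) v * v = 1 := by
    rw [mul_comm, Complex.mul_conj]
    rw [Complex.normSq_eq_norm_sq, hv]
    norm_num
  have h2 : v * (starRingEnd ℂ) v = 1 := by rw [mul_comm]; exact h1
  constructor
  · rw [czq_star, ← czq_mul, h1, czq_one]
  · rw [czq_star, ← czq_mul, h2, czq_one]

/-- `czq` as an `ℝ`-linear map. -/
def czqLin : ℂ →ₗ[ℝ] ℍ[ℝ] where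
  toFun := czq
  map_add' z w := by ext <;> simp
  map_smul' c z := by ext <;> simp

def czqL : ℂ →L[ℝ] ℍ[ℝ] := czqLin.toContinuousLinearMap

@[simp] lemma czqL_apply (z : ℂ) : czqL z = czq z := rfl

/-- the infinitesimal weighted rotation applied to `x` -/
def mq (x : ℍ[ℝ]) : ℍ[ℝ] := (-(r:ℝ)) • (czq Complex.I * x) + (s:ℝ) • (x * czq Complex.I)

lemma key_re (x y : ℍ[ℝ]) :
    (star (mq r s x) * y).re
      = ((s:ℝ) - r) * (x.re * y.imI - x.imI * y.re)
        - ((s:ℝ) + r) * (x.imJ * y.imK - x.imK * y.imJ) := by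
  simp [mq, Quaternion.re_mul, Quaternion.imI_mul, Quaternion.imJ_mul, Quaternion.imK_mul,
    Complex.I_re, Complex.I_im]
  ring

lemma czq_conj_form (z1 z2 a b : ℂ) :
    czq z1 * (czq a + czq b * qJ) * czq z2
      = czq (z1 * a * z2) + czq (z1 * b * starRingEnd ℂ z2) * qJ := by
  rw [mul_add, add_mul]
  congr 1
  · rw [← czq_mul, ← czq_mul]
  · rw [czq_mul, czq_mul]
    calc czq z1 * (czq b * qJ) * czq z2 = czq z1 * czq b * (qJ * czq z2) := by
          noncomm_ring
      _ = czq z1 * czq b * (czq (starRingEnd ℂ z2) * qJ) := by rw [qJ_czq]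
      _ = czq z1 * czq b * czq (starRingEnd ℂ z2) * qJ := by noncomm_ring

lemma unit_real (v : ℂ) (h1 : ‖v‖ = 1) (h0 : v.im = 0) : v = 1 ∨ v = -1 := by
  have hv : v = (v.re : ℂ) := Complex.ext rfl (by simp [h0])
  rw [hv] at h1
  rw [Complex.norm_real] at h1
  rcases abs_eq (by norm_num : (0:ℝ) ≤ 1) |>.1 h1 with h | h
  · left; rw [hv, h]; norm_num
  · right; rw [hv, h]; norm_num

lemma unit_eq (c v : ℂ) (hc : ‖c‖ = 1) (hv : ‖v‖ = 1)
    (him : ((starRingEnd ℂ) c * v).im = 0) : v = c ∨ v = -c := by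
  have hns : (Complex.normSq c : ℂ) = 1 := by
    rw [Complex.normSq_eq_norm_sq, hc]; norm_num
  have hcv : ‖(starRingEnd ℂ) c * v‖ = 1 := by
    rw [norm_mul, RCLike.norm_conj, hc, hv, one_mul]
  have base : ∀ e : ℂ, (starRingEnd ℂ) c * v = e → v = c * e := by
    intro e he
    calc v = (Complex.normSq c : ℂ) * v := by rw [hns, one_mul]
      _ = c * ((starRingEnd ℂ) c * v) := by rw [← mul_assoc, Complex.mul_conj]
      _ = c * e := by rw [he]
  rcases unit_real _ hcv him with h | h
  · left; rw [base 1 h, mul_one]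
  · right; rw [base (-1) h]; ring

lemma pow_fiber_finite (m : ℕ) (hm : 0 < m) (q : ℂ) : {ζ : ℂ | ζ ^ m = q}.Finite := by
  have : {ζ : ℂ | ζ ^ m = q} = ↑(Polynomial.nthRoots m q).toFinset := by
    ext ζ; simp [Polynomial.mem_nthRoots hm]
  rw [this]
  exact (Polynomial.nthRoots m q).toFinset.finite_toSet

lemma zpow_fiber_finite (k : ℤ) (hk : k ≠ 0) (q : ℂ) :
    {ζ : ℂ | ζ ≠ 0 ∧ ζ ^ k = q}.Finite := by
  rcases lt_or_gt_of_ne hk with hneg | hpos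
  · have hm : 0 < k.natAbs := Int.natAbs_pos.mpr hk
    apply (pow_fiber_finite k.natAbs hm q⁻¹).subset
    rintro ζ ⟨hζ0, hζ⟩
    have hk' : (k.natAbs : ℤ) = -k := Int.ofNat_natAbs_of_nonpos (le_of_lt hneg)
    show ζ ^ (k.natAbs) = q⁻¹
    have : ζ ^ ((k.natAbs : ℤ)) = q⁻¹ := by
      rw [hk', zpow_neg, hζ]
    rwa [zpow_natCast] at this
  · have hm : 0 < k.natAbs := Int.natAbs_pos.mpr hk
    apply (pow_fiber_finite k.natAbs hm q).subset
    rintro ζ ⟨hζ0, hζ⟩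
    have hk' : (k.natAbs : ℤ) = k := Int.natAbs_of_nonneg (le_of_lt hpos)
    show ζ ^ (k.natAbs) = q
    have : ζ ^ ((k.natAbs : ℤ)) = q := by rw [hk', hζ]
    rwa [zpow_natCast] at this

end NPaux

namespace NPmat

open NPaux

def Pmat {N : ℕ} (u : Fin N → ℍ[ℝ]) (d : ℍ[ℝ]) : Matrix (Fin N) (Fin N) ℍ[ℝ] :=
  Matrix.of fun i j => u i * d * star (u j)

lemma Pmat_add {N : ℕ} (u : Fin N → ℍ[ℝ]) (d e : ℍ[ℝ]) :
    Pmat u d + Pmat u e = Pmat u (d + e) := by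
  apply Matrix.ext; intro i j
  simp [Pmat, mul_add, add_mul]

lemma Pmat_zero {N : ℕ} (u : Fin N → ℍ[ℝ]) : Pmat u 0 = 0 := by
  apply Matrix.ext; intro i j; simp [Pmat]

lemma star_Pmat {N : ℕ} (u : Fin N → ℍ[ℝ]) (d : ℍ[ℝ]) :
    star (Pmat u d) = Pmat u (star d) := by
  apply Matrix.ext; intro i j
  simp [Pmat, Matrix.star_apply, star_mul, mul_assoc]

lemma Pmat_mul_Pmat {N : ℕ} (u : Fin N → ℍ[ℝ])
    (husum : ∑ i, star (u i) * u i = (1 : ℍ[ℝ])) (d e : ℍ[ℝ]) :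
    Pmat u d * Pmat u e = Pmat u (d * e) := by
  apply Matrix.ext; intro i j
  simp only [Pmat, Matrix.mul_apply, Matrix.of_apply]
  have : ∀ m : Fin N, u i * d * star (u m) * (u m * e * star (u j))
      = u i * (d * ((star (u m) * u m) * (e * star (u j)))) := by
    intro m; simp [mul_assoc]
  rw [Finset.sum_congr rfl fun m _ => this m]
  rw [← Finset.mul_sum, ← Finset.mul_sum, ← Finset.sum_mul, husum]
  simp [mul_assoc]

def Amat {N : ℕ} (u : Fin N → ℍ[ℝ]) (c : ℍ[ℝ]) : Matrix (Fin N) (Fin N) ℍ[ℝ] :=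
  1 + Pmat u (c - 1)

lemma Amat_one {N : ℕ} (u : Fin N → ℍ[ℝ]) : Amat u 1 = 1 := by
  rw [Amat, sub_self, Pmat_zero, add_zero]

lemma Amat_unitary {N : ℕ} (u : Fin N → ℍ[ℝ])
    (husum : ∑ i, star (u i) * u i = (1 : ℍ[ℝ])) (c : ℍ[ℝ])
    (hc : star c * c = 1) (hc' : c * star c = 1) :
    Amat u c ∈ unitary (Matrix (Fin N) (Fin N) ℍ[ℝ]) := by
  have hstar : star (Amat u c) = 1 + Pmat u (star c - 1) := by
    simp [Amat, star_Pmat, star_sub]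
  constructor
  · rw [hstar, Amat]
    rw [add_mul, mul_add, mul_add, one_mul, mul_one, Pmat_mul_Pmat u husum]
    simp only [one_mul, mul_one]
    have : (1 : Matrix (Fin N) (Fin N) ℍ[ℝ]) + Pmat u (c - 1)
          + (Pmat u (star c - 1) + Pmat u ((star c - 1) * (c - 1)))
        = 1 + (Pmat u (c - 1) + (Pmat u (star c - 1) + Pmat u ((star c - 1) * (c - 1)))) := by
      abel
    rw [this, Pmat_add, Pmat_add]
    have h2 : c - 1 + (star c - 1 + (star c - 1) * (c - 1)) = 0 := by
      have h3 : (star c - 1) * (c - 1) = star c * c - star c - c + 1 := by noncomm_ring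
      rw [h3, hc]; abel
    rw [h2, Pmat_zero, add_zero]
  · rw [hstar, Amat]
    rw [add_mul, mul_add, mul_add, one_mul, mul_one, Pmat_mul_Pmat u husum]
    simp only [one_mul, mul_one]
    have : (1 : Matrix (Fin N) (Fin N) ℍ[ℝ]) + Pmat u (star c - 1)
          + (Pmat u (c - 1) + Pmat u ((c - 1) * (star c - 1)))
        = 1 + (Pmat u (star c - 1) + (Pmat u (c - 1) + Pmat u ((c - 1) * (star c - 1)))) := by
      abel
    rw [this, Pmat_add, Pmat_add]
    have h2 : star c - 1 + (c - 1 + (c - 1) * (star c - 1)) = 0 := by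
      have h3 : (c - 1) * (star c - 1) = c * star c - c - star c + 1 := by noncomm_ring
      rw [h3, hc']; abel
    rw [h2, Pmat_zero, add_zero]

lemma Amat_mulVec {N : ℕ} (u : Fin N → ℍ[ℝ])
    (husum : ∑ i, star (u i) * u i = (1 : ℍ[ℝ])) (c : ℍ[ℝ]) (x : ℍ[ℝ]) :
    (Amat u c).mulVec (fun j => u j * x) = fun i => u i * (c * x) := by
  funext i
  rw [Amat, Matrix.add_mulVec, Matrix.one_mulVec]
  have hP : (Pmat u (c - 1)).mulVec (fun j => u j * x) i = u i * ((c - 1) * x) := by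
    simp only [Matrix.mulVec, dotProduct, Pmat, Matrix.of_apply]
    have : ∀ m : Fin N, u i * (c - 1) * star (u m) * (u m * x)
        = u i * ((c - 1) * ((star (u m) * u m) * x)) := by
      intro m; simp [mul_assoc]
    rw [Finset.sum_congr rfl fun m _ => this m]
    rw [← Finset.mul_sum, ← Finset.mul_sum, ← Finset.sum_mul, husum, one_mul]
  simp only [Pi.add_apply, hP]
  rw [← mul_add]
  congr 1
  noncomm_ring

end NPmat
section actlems
open NPaux NPmat

lemma normal_pair (u v : Fin n → ℍ[ℝ]) : ((0, v) : VV n) ∈ normalSet n r s (u, 0) := by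
  rintro τ ⟨g, hP, hg0, hd⟩
  have h2 : HasDerivAt ((ContinuousLinearMap.snd ℝ (Fin n → ℍ[ℝ]) (Fin n → ℍ[ℝ])) ∘
      (fun t => act n r s (g t) ((u, 0) : VV n))) τ.2 0 :=
    (ContinuousLinearMap.snd ℝ (Fin n → ℍ[ℝ]) (Fin n → ℍ[ℝ])).hasFDerivAt.comp_hasDerivAt 0 hd
  have heq : ((ContinuousLinearMap.snd ℝ (Fin n → ℍ[ℝ]) (Fin n → ℍ[ℝ])) ∘
      (fun t => act n r s (g t) ((u, 0) : VV n))) = fun _ => (0 : Fin n → ℍ[ℝ]) := by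
    funext t
    show (act n r s (g t) ((u, 0) : VV n)).2 = 0
    funext i
    simp [act, Matrix.mulVec_zero]
  rw [heq] at h2
  have hτ2 : τ.2 = 0 := ((hasDerivAt_const (0:ℝ) (0 : Fin n → ℍ[ℝ])).unique h2).symm
  show ip n ((0, v) : VV n) τ = 0
  simp [ip, hτ2]

lemma iso_act (u : Fin n → ℍ[ℝ]) (g : AA n) (hg : inIso n r s ((u, 0) : VV n) g)
    (x : ℍ[ℝ]) :
    act n r s g ((0 : Fin n → ℍ[ℝ]), fun i => u i * x)
      = (0, fun i => u i * (czq (g.1 ^ (-r)) * x * czq (g.1 ^ s))) := by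
  obtain ⟨⟨hnorm, _⟩, hfix⟩ := hg
  have hz : g.1 ≠ 0 := by
    intro h0; rw [h0] at hnorm; simp at hnorm
  have hfirst : ∀ i, g.2.mulVec u i * czq (g.1 ^ r) = u i := by
    intro i
    exact congrFun (congrArg Prod.fst hfix) i
  have hmv : ∀ i, g.2.mulVec u i = u i * czq (g.1 ^ (-r)) := by
    intro i
    have h1 : g.1 ^ r * g.1 ^ (-r) = 1 := by
      rw [← zpow_add₀ hz]; simp
    calc g.2.mulVec u i = g.2.mulVec u i * czq (g.1 ^ r * g.1 ^ (-r)) := by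
          rw [h1, czq_one, mul_one]
      _ = (g.2.mulVec u i * czq (g.1 ^ r)) * czq (g.1 ^ (-r)) := by
          rw [czq_mul, mul_assoc]
      _ = u i * czq (g.1 ^ (-r)) := by rw [hfirst i]
  have hsnd : ∀ i, g.2.mulVec (fun j => u j * x) i = u i * czq (g.1 ^ (-r)) * x := by
    intro i
    have : ∀ j, g.2 i j * (u j * x) = (g.2 i j * u j) * x := fun j => (mul_assoc _ _ _).symm
    calc g.2.mulVec (fun j => u j * x) i = ∑ j, g.2 i j * (u j * x) := rfl
      _ = ∑ j, (g.2 i j * u j) * x := Finset.sum_congr rfl fun j _ => this j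
      _ = (∑ j, g.2 i j * u j) * x := by rw [Finset.sum_mul]
      _ = g.2.mulVec u i * x := rfl
      _ = u i * czq (g.1 ^ (-r)) * x := by rw [hmv i]
  have h1 : (act n r s g ((0 : Fin n → ℍ[ℝ]), fun i => u i * x)).1 = 0 := by
    funext i; simp [act, Matrix.mulVec_zero]
  have h2 : (act n r s g ((0 : Fin n → ℍ[ℝ]), fun i => u i * x)).2
      = fun i => u i * (czq (g.1 ^ (-r)) * x * czq (g.1 ^ s)) := by
    funext i
    show g.2.mulVec (fun j => u j * x) i * czq (g.1 ^ s) = _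
    rw [hsnd i]
    noncomm_ring
  exact Prod.ext h1 h2

lemma ip_uu (u : Fin n → ℍ[ℝ]) (hns : ∑ i, Quaternion.normSq (u i) = 1) (m y : ℍ[ℝ]) :
    ip n ((0 : Fin n → ℍ[ℝ]), fun i => u i * m) ((0 : Fin n → ℍ[ℝ]), fun i => u i * y)
      = (star m * y).re := by
  have hterm : ∀ i, star (u i * m) * (u i * y) = Quaternion.normSq (u i) • (star m * y) := by
    intro i
    rw [star_mul]
    calc star m * star (u i) * (u i * y) = star m * ((star (u i) * u i) * y) := by
          simp [mul_assoc]
      _ = star m * (((Quaternion.normSq (u i) : ℝ) : ℍ[ℝ]) * y) := by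
          rw [Quaternion.star_mul_self]
      _ = star m * (Quaternion.normSq (u i) • y) := by
          rw [Quaternion.coe_mul_eq_smul]
      _ = Quaternion.normSq (u i) • (star m * y) := (mul_smul_comm _ _ _)
  show (∑ i, (star ((0 : Fin n → ℍ[ℝ]) i) * (0 : Fin n → ℍ[ℝ]) i).re)
      + ∑ i, (star (u i * m) * (u i * y)).re = (star m * y).re
  have h0 : (∑ i : Fin n, (star ((0 : Fin n → ℍ[ℝ]) i) * (0 : Fin n → ℍ[ℝ]) i).re) = 0 := by
    simp
  rw [h0, zero_add]
  calc ∑ i, (star (u i * m) * (u i * y)).re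
      = ∑ i, Quaternion.normSq (u i) * (star m * y).re := by
        refine Finset.sum_congr rfl fun i _ => ?_
        rw [hterm i, Quaternion.re_smul, smul_eq_mul]
    _ = (∑ i, Quaternion.normSq (u i)) * (star m * y).re := by rw [Finset.sum_mul]
    _ = (star m * y).re := by rw [hns, one_mul]

end actlems

section tangentlem
open NPaux NPmat

/-- auxiliary circle curve -/
def ef (c : ℝ) (t : ℝ) : ℂ := Complex.exp (((c * t : ℝ) : ℂ) * Complex.I)

lemma ef_norm (c t : ℝ) : ‖ef c t‖ = 1 := Complex.norm_exp_ofReal_mul_I _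

lemma ef_zero (c : ℝ) : ef c 0 = 1 := by
  rw [ef]; norm_num

lemma hEp_aux (a : ℤ) (t : ℝ) :
    (Complex.exp ((t:ℂ) * Complex.I)) ^ a = ef ((a : ℝ)) t := by
  rw [ef, ← Complex.exp_int_mul]; congr 1; push_cast; ring

lemma ef_hasDeriv (c : ℝ) : HasDerivAt (ef c) ((c:ℂ) * Complex.I) 0 := by
  have h1 : HasDerivAt (fun t : ℝ => c * t) c 0 := by
    simpa using (hasDerivAt_id (0:ℝ)).const_mul c
  have h2 := h1.smul_const Complex.I
  have h3 : HasDerivAt (fun t : ℝ => (c * t) • Complex.I) ((c : ℂ) * Complex.I) 0 := by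
    rw [← Complex.real_smul]; exact h2
  have h4 := h3.cexp
  have h5 : ef c = fun t : ℝ => Complex.exp ((c * t) • Complex.I) := by
    funext t; rw [ef, Complex.real_smul]
  rw [h5]
  simpa using h4

lemma czq_ef_hasDeriv (c : ℝ) :
    HasDerivAt (fun t => czq (ef c t)) (c • czq Complex.I) 0 := by
  have h3 := (czqL.hasFDerivAt (x := ef c 0)).comp_hasDerivAt 0 (ef_hasDeriv c)
  have hv : czqL ((c:ℂ) * Complex.I) = c • czq Complex.I := by
    rw [czqL_apply, czq_real_mul_I]
  rw [hv] at h3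
  exact h3

/-- the curve in the isotropy group -/
def curveG {N : ℕ} (u : Fin N → ℍ[ℝ]) (r : ℤ) (t : ℝ) : AA N :=
  (Complex.exp ((t:ℂ) * Complex.I), Amat u (czq (ef ((-r : ℤ) : ℝ) t)))

lemma tangent_mem (u : Fin n → ℍ[ℝ]) (husum : ∑ i, star (u i) * u i = (1 : ℍ[ℝ]))
    (x : ℍ[ℝ]) :
    ((0 : Fin n → ℍ[ℝ]), fun i => u i * NPaux.mq r s x)
      ∈ orbitTangent n r s (inIso n r s ((u, 0) : VV n)) (0, fun i => u i * x) := by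
  have harg : (fun j => u j * 1) = u := by funext j; rw [mul_one]
  have hiso : ∀ t, inIso n r s ((u, 0) : VV n) (curveG u r t) := by
    intro t
    refine ⟨⟨?_, ?_⟩, ?_⟩
    · exact Complex.norm_exp_ofReal_mul_I t
    · exact Amat_unitary u husum _ (czq_unit (ef_norm _ t)).1 (czq_unit (ef_norm _ t)).2
    · apply Prod.ext
      · funext i
        show (Amat u (czq (ef ((-r : ℤ) : ℝ) t))).mulVec u i
            * czq (Complex.exp ((t:ℂ) * Complex.I) ^ r) = u i
        have hmv := congrFun (Amat_mulVec u husum (czq (ef ((-r : ℤ) : ℝ) t)) 1) i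
        rw [harg] at hmv
        rw [hmv, hEp_aux r t, mul_one, mul_assoc, ← czq_mul]
        have hprod : ef ((-r : ℤ) : ℝ) t * ef ((r : ℤ) : ℝ) t = 1 := by
          rw [ef, ef, ← Complex.exp_add]
          rw [show (((((-r : ℤ) : ℝ) * t : ℝ) : ℂ) * Complex.I
              + ((((r : ℤ) : ℝ) * t : ℝ) : ℂ) * Complex.I) = 0 by push_cast; ring]
          exact Complex.exp_zero
        rw [hprod, czq_one, mul_one]
      · funext i
        show (Amat u (czq (ef ((-r : ℤ) : ℝ) t))).mulVec 0 i
            * czq (Complex.exp ((t:ℂ) * Complex.I) ^ s) = 0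
        rw [Matrix.mulVec_zero]
        simp
  have hg0 : curveG u r 0 = 1 := by
    have h1 : (curveG u r 0).1 = 1 := by
      show Complex.exp (((0:ℝ):ℂ) * Complex.I) = 1
      norm_num
    have h2 : (curveG u r 0).2 = 1 := by
      show Amat u (czq (ef ((-r : ℤ) : ℝ) 0)) = 1
      rw [ef_zero, czq_one, Amat_one]
    exact Prod.ext h1 h2
  have heqfun : (fun t => act n r s (curveG u r t) ((0 : Fin n → ℍ[ℝ]), fun i => u i * x))
      = fun t => (((0 : Fin n → ℍ[ℝ]),
          fun i => u i * (czq (ef ((-r : ℤ) : ℝ) t) * x * czq (ef ((s : ℤ) : ℝ) t))) : VV n) := by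
    funext t
    apply Prod.ext
    · funext i
      show (curveG u r t).2.mulVec 0 i * czq ((curveG u r t).1 ^ r) = 0
      rw [Matrix.mulVec_zero]; simp
    · funext i
      show (Amat u (czq (ef ((-r : ℤ) : ℝ) t))).mulVec (fun j => u j * x) i
          * czq (Complex.exp ((t:ℂ) * Complex.I) ^ s) = _
      rw [congrFun (Amat_mulVec u husum (czq (ef ((-r : ℤ) : ℝ) t)) x) i, hEp_aux s t]
      show u i * (czq (ef ((-r : ℤ) : ℝ) t) * x) * czq (ef ((s : ℤ) : ℝ) t)
          = u i * (czq (ef ((-r : ℤ) : ℝ) t) * x * czq (ef ((s : ℤ) : ℝ) t))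
      rw [mul_assoc]
  have hI : ∀ i : Fin n, HasDerivAt
      (fun t => u i * (czq (ef ((-r : ℤ) : ℝ) t) * x * czq (ef ((s : ℤ) : ℝ) t)))
      (u i * NPaux.mq r s x) 0 := by
    intro i
    have d1 := (czq_ef_hasDeriv ((-r : ℤ) : ℝ)).mul (hasDerivAt_const (0:ℝ) x)
    have d2 := d1.mul (czq_ef_hasDeriv ((s : ℤ) : ℝ))
    have d3 := (hasDerivAt_const (0:ℝ) (u i)).mul d2
    simp only [Pi.mul_apply] at d3
    refine d3.congr_deriv ?_
    rw [ef_zero, ef_zero, czq_one]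
    simp only [NPaux.mq, mul_zero, add_zero, mul_one, one_mul, zero_mul, zero_add,
      smul_mul_assoc, mul_smul_comm, mul_add]
    push_cast
    module
  refine ⟨curveG u r, hiso, hg0, ?_⟩
  rw [heqfun]
  exact HasDerivAt.prodMk (hasDerivAt_const (0:ℝ) (0 : Fin n → ℍ[ℝ])) (hasDerivAt_pi.2 hI)

end tangentlem

section wcirc

def wcirc (t : ℝ) : ℂ := (1 + (t:ℂ) * Complex.I) / (1 - (t:ℂ) * Complex.I)

lemma wcirc_num_ne (t : ℝ) : (1 + (t:ℂ) * Complex.I) ≠ 0 := by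
  intro h
  have h1 : (1 + (t:ℂ) * Complex.I).re = 1 := by simp
  rw [h] at h1
  simp at h1

lemma wcirc_den_ne (t : ℝ) : (1 - (t:ℂ) * Complex.I) ≠ 0 := by
  intro h
  have h1 : (1 - (t:ℂ) * Complex.I).re = 1 := by simp
  rw [h] at h1
  simp at h1

lemma wcirc_ne_zero (t : ℝ) : wcirc t ≠ 0 :=
  div_ne_zero (wcirc_num_ne t) (wcirc_den_ne t)

lemma wcirc_conj (t : ℝ) : (starRingEnd ℂ) (1 + (t:ℂ) * Complex.I) = 1 - (t:ℂ) * Complex.I := by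
  rw [map_add, map_one, map_mul, Complex.conj_ofReal, Complex.conj_I]
  ring

lemma wcirc_norm (t : ℝ) : ‖wcirc t‖ = 1 := by
  rw [wcirc, norm_div, ← wcirc_conj, RCLike.norm_conj, div_self]
  exact norm_ne_zero_iff.mpr (wcirc_num_ne t)

lemma wcirc_injective : Function.Injective wcirc := by
  intro a b hab
  rw [wcirc, wcirc, div_eq_div_iff (wcirc_den_ne a) (wcirc_den_ne b)] at hab
  have him := congrArg Complex.im hab
  simp only [Complex.mul_im, Complex.add_re, Complex.add_im, Complex.sub_re, Complex.sub_im,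
    Complex.one_re, Complex.one_im, Complex.mul_re, Complex.I_re, Complex.I_im,
    Complex.ofReal_re, Complex.ofReal_im] at him
  ring_nf at him
  linarith

end wcirc

/-- Let `G = U(1) × Sp(n)` (`n ≥ 2`) act on `ℍⁿ ⊕ ℍⁿ` by
`(z, A)·(u, v) = (A u z^r, A v z^s)`.  If `r ≠ ±s` then the slice representation at a
point `(u, 0)` with `u` a unit vector is non-polar; hence the representation is
infinitesimally polar only if `r = ±s`. -/
theorem slice_at_u0_nonpolar_of_weights_ne (hn : 2 ≤ n)
    (u : Fin n → ℍ[ℝ]) (hu : (∑ i, (star (u i) * u i).re) = 1) :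
    ((r ≠ s ∧ r ≠ -s) → ¬SliceIsPolarAt n r s (u, 0)) ∧
    (InfinitesimallyPolar n r s → r = s ∨ r = -s) := by
  have hstar : ∀ i, star (u i) * u i = ((Quaternion.normSq (u i) : ℝ) : ℍ[ℝ]) :=
    fun i => Quaternion.star_mul_self _
  have hns : ∑ i, Quaternion.normSq (u i) = 1 := by
    rw [← hu]
    refine Finset.sum_congr rfl fun i _ => ?_
    rw [hstar i, Quaternion.re_coe]
  have husum : ∑ i, star (u i) * u i = (1 : ℍ[ℝ]) := by
    have hc : ∑ i, star (u i) * u i = ∑ i, ((Quaternion.normSq (u i) : ℝ) : ℍ[ℝ]) :=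
      Finset.sum_congr rfl fun i _ => hstar i
    have hmap := map_sum (algebraMap ℝ ℍ[ℝ]) (fun i => Quaternion.normSq (u i)) Finset.univ
    rw [Quaternion.algebraMap_def] at hmap
    rw [hc, ← hmap, hns]
    simp
  have main : (r ≠ s ∧ r ≠ -s) → ¬SliceIsPolarAt n r s (u, 0) := by
    rintro ⟨hrs, hrns⟩ ⟨Sig, hsub, h2, h3⟩
    -- orthogonality of tangents at Sig points against Sig points
    have horth : ∀ x y : ℍ[ℝ],
        ((0 : Fin n → ℍ[ℝ]), fun i => u i * x) ∈ Sig →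
        ((0 : Fin n → ℍ[ℝ]), fun i => u i * y) ∈ Sig →
        (star (NPaux.mq r s x) * y).re = 0 := by
      intro x y hx hy
      have h := h3 _ hx _ (tangent_mem n r s u husum x) _ hy
      rwa [ip_uu n u hns (NPaux.mq r s x) y] at h
    have hrel : ∀ a b a' b' : ℂ,
        ((0 : Fin n → ℍ[ℝ]), fun i => u i * (czq a + czq b * NPaux.qJ)) ∈ Sig →
        ((0 : Fin n → ℍ[ℝ]), fun i => u i * (czq a' + czq b' * NPaux.qJ)) ∈ Sig →
        ((s:ℝ) - r) * (a.re * a'.im - a.im * a'.re)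
          - ((s:ℝ) + r) * (b.re * b'.im - b.im * b'.re) = 0 := by
      intro a b a' b' h h'
      have h0 := horth _ _ h h'
      rw [NPaux.key_re, NPaux.cqJ a b, NPaux.cqJ a' b'] at h0
      exact h0
    have getSig : ∀ a b : ℂ, ∃ z : ℂ, ‖z‖ = 1 ∧
        ((0 : Fin n → ℍ[ℝ]), fun i => u i *
          (czq (z ^ (-r) * a * z ^ s)
            + czq (z ^ (-r) * b * (starRingEnd ℂ) (z ^ s)) * NPaux.qJ)) ∈ Sig := by
      intro a b
      obtain ⟨g, hg, hmem⟩ := h2 ((0 : Fin n → ℍ[ℝ]), fun i => u i * (czq a + czq b * NPaux.qJ))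
        (normal_pair n r s u _)
      refine ⟨g.1, hg.1.1, ?_⟩
      rw [iso_act n r s u g hg] at hmem
      rw [show (fun i => u i * (czq (g.1 ^ (-r)) * (czq a + czq b * NPaux.qJ) * czq (g.1 ^ s)))
          = fun i => u i * (czq (g.1 ^ (-r) * a * g.1 ^ s)
            + czq (g.1 ^ (-r) * b * (starRingEnd ℂ) (g.1 ^ s)) * NPaux.qJ) from
        by funext i; rw [NPaux.czq_conj_form]] at hmem
      exact hmem
    obtain ⟨z₁, hz₁n, hσ₁⟩ := getSig 1 0
    obtain ⟨z₂, hz₂n, hσ₂⟩ := getSig 0 1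
    set c₁ := z₁ ^ (-r) * 1 * z₁ ^ s with hc₁def
    set c₂ := z₂ ^ (-r) * 1 * (starRingEnd ℂ) (z₂ ^ s) with hc₂def
    have hkR : ((s:ℝ) - r) ≠ 0 := by
      intro h
      apply hrs
      have : (r:ℝ) = s := by linarith
      exact_mod_cast this
    have hlR : ((s:ℝ) + r) ≠ 0 := by
      intro h
      apply hrns
      have : (r:ℝ) = -s := by linarith
      exact_mod_cast this
    have hkZ : s - r ≠ 0 := sub_ne_zero.mpr fun h => hrs h.symm
    have hnc₁ : ‖c₁‖ = 1 := by
      rw [hc₁def, norm_mul, norm_mul, norm_zpow, norm_zpow, hz₁n]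
      simp
    have hnc₂ : ‖c₂‖ = 1 := by
      rw [hc₂def, norm_mul, norm_mul, norm_zpow, RCLike.norm_conj, norm_zpow, hz₂n]
      simp
    -- the per-t step
    have hstep : ∀ t : ℝ, ∃ z : ℂ, z ≠ 0 ∧
        (z ^ (s - r) = c₁ ∨ z ^ (s - r) = -c₁) ∧
        (wcirc t = c₂ * z ^ (r + s) ∨ wcirc t = -(c₂ * z ^ (r + s))) := by
      intro t
      obtain ⟨z, hzn, hσt⟩ := getSig 1 (wcirc t)
      have hz0 : z ≠ 0 := by
        intro h; rw [h] at hzn; simp at hzn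
      have e₁ := hrel _ _ _ _ hσ₁ hσt
      have e₂ := hrel _ _ _ _ hσ₂ hσt
      simp only [mul_zero, zero_mul, Complex.zero_re, Complex.zero_im, sub_zero,
        zero_sub, neg_eq_zero] at e₁ e₂
      set A := z ^ (-r) * 1 * z ^ s with hAdef
      set B := z ^ (-r) * wcirc t * (starRingEnd ℂ) (z ^ s) with hBdef
      have hnA : ‖A‖ = 1 := by
        rw [hAdef, norm_mul, norm_mul, norm_zpow, norm_zpow, hzn]
        simp
      have hnB : ‖B‖ = 1 := by
        rw [hBdef, norm_mul, norm_mul, norm_zpow, RCLike.norm_conj, norm_zpow, hzn, wcirc_norm]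
        simp
      have hA0 : c₁.re * A.im - c₁.im * A.re = 0 := by
        rcases mul_eq_zero.mp e₁ with h | h
        · exact absurd h hkR
        · linarith
      have hB0 : c₂.re * B.im - c₂.im * B.re = 0 := by
        rcases mul_eq_zero.mp e₂ with h | h
        · exact absurd h hlR
        · linarith
      have himA : ((starRingEnd ℂ) c₁ * A).im = 0 := by
        simp only [Complex.mul_im, Complex.conj_re, Complex.conj_im]
        linarith
      have himB : ((starRingEnd ℂ) c₂ * B).im = 0 := by
        simp only [Complex.mul_im, Complex.conj_re, Complex.conj_im]
        linarith
      have hAc := NPaux.unit_eq c₁ A hnc₁ hnA himA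
      have hBc := NPaux.unit_eq c₂ B hnc₂ hnB himB
      have hAz : A = z ^ (s - r) := by
        rw [hAdef, mul_one, ← zpow_add₀ hz0, neg_add_eq_sub]
      have hconjz : (starRingEnd ℂ) (z ^ s) = z ^ (-s) := by
        have hn1 : Complex.normSq z = 1 := by
          rw [Complex.normSq_eq_norm_sq, hzn]; norm_num
        have h1 : (starRingEnd ℂ) z = z⁻¹ := by
          apply eq_inv_of_mul_eq_one_left
          rw [mul_comm, Complex.mul_conj, hn1]
          norm_num
        rw [map_zpow₀, h1, inv_zpow, ← zpow_neg]
      have hBz : B = wcirc t * z ^ (-(r + s)) := by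
        rw [hBdef, hconjz]
        have h5 : z ^ (-r) * wcirc t * z ^ (-s) = wcirc t * (z ^ (-r) * z ^ (-s)) := by ring
        rw [h5, ← zpow_add₀ hz0]
        congr 1
        ring_nf
      have hzz : z ^ (-(r + s)) * z ^ (r + s) = 1 := by
        rw [← zpow_add₀ hz0, show (-(r + s) + (r + s) : ℤ) = 0 by ring, zpow_zero]
      refine ⟨z, hz0, by rw [← hAz]; exact hAc, ?_⟩
      rcases hBc with h | h
      · left
        have := congrArg (fun v => v * z ^ (r + s)) (hBz.symm.trans h)
        rw [mul_assoc, hzz, mul_one] at this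
        rw [this]
      · right
        have := congrArg (fun v => v * z ^ (r + s)) (hBz.symm.trans h)
        rw [mul_assoc, hzz, mul_one] at this
        rw [this]
        ring
    -- the finite set of possible values
    set Q : Set ℂ := (fun p : ℂ × ℂ => p.1 * c₂ ^ (s - r) * (p.2 * c₁) ^ (r + s)) ''
      (({1, -1} : Set ℂ) ×ˢ ({1, -1} : Set ℂ)) with hQdef
    have hkey : ∀ t : ℝ, wcirc t ^ (s - r) ∈ Q := by
      intro t
      obtain ⟨z, hz0, hA, hB⟩ := hstep t
      have hzk : ∃ e₂ ∈ ({1, -1} : Set ℂ), z ^ (s - r) = e₂ * c₁ := by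
        rcases hA with h | h
        · exact ⟨1, Set.mem_insert _ _, by rw [h, one_mul]⟩
        · exact ⟨-1, Set.mem_insert_of_mem _ rfl, by rw [h]; ring⟩
      obtain ⟨e₂, he₂, hz⟩ := hzk
      have hε : ∃ ε ∈ ({1, -1} : Set ℂ), wcirc t = ε * (c₂ * z ^ (r + s)) := by
        rcases hB with h | h
        · exact ⟨1, Set.mem_insert _ _, by rw [h, one_mul]⟩
        · exact ⟨-1, Set.mem_insert_of_mem _ rfl, by rw [h]; ring⟩
      obtain ⟨ε, hεm, hεe⟩ := hε
      have hpow : wcirc t ^ (s - r) = ε ^ (s - r) * c₂ ^ (s - r) * (e₂ * c₁) ^ (r + s) := by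
        rw [hεe, mul_zpow, mul_zpow, ← zpow_mul, mul_comm (r + s) (s - r), zpow_mul, hz,
          mul_assoc]
      have hεk : ε ^ (s - r) ∈ ({1, -1} : Set ℂ) := by
        rcases hεm with h | h
        · rw [h, one_zpow]; exact Set.mem_insert _ _
        · rw [h]
          rcases Int.even_or_odd (s - r) with he | ho
          · rw [he.neg_one_zpow]; exact Set.mem_insert _ _
          · rw [ho.neg_one_zpow]; exact Set.mem_insert_of_mem _ rfl
      exact ⟨(ε ^ (s - r), e₂), Set.mem_prod.mpr ⟨hεk, he₂⟩, hpow.symm⟩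
    have hQfin : Q.Finite :=
      ((((Set.finite_singleton (-1:ℂ)).insert 1).prod
        ((Set.finite_singleton (-1:ℂ)).insert 1)).image _)
    have hfib : ∀ q : ℂ, ({t : ℝ | wcirc t ^ (s - r) = q}).Finite := by
      intro q
      have hR := NPaux.zpow_fiber_finite (s - r) hkZ q
      have hsubp : {t : ℝ | wcirc t ^ (s - r) = q}
          ⊆ wcirc ⁻¹' {ζ : ℂ | ζ ≠ 0 ∧ ζ ^ (s - r) = q} :=
        fun t ht => ⟨wcirc_ne_zero t, ht⟩
      exact (hR.preimage wcirc_injective.injOn).subset hsubp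
    have hcover : (Set.univ : Set ℝ) ⊆ ⋃ q ∈ Q, {t : ℝ | wcirc t ^ (s - r) = q} := by
      intro t _
      exact Set.mem_biUnion (hkey t) rfl
    exact Set.infinite_univ ((hQfin.biUnion fun q _ => hfib q).subset hcover)
  refine ⟨main, fun hinf => ?_⟩
  by_contra hne
  push_neg at hne
  have hp0 : ((u, 0) : VV n) ≠ 0 := by
    intro h
    have hu0 : u = 0 := congrArg Prod.fst h
    rw [hu0] at hu
    simp at hu
  exact main hne (hinf _ hp0)

end
end

section
/- Let G be a compact Lie group acting isometrically on a complete Riemannian manifold M, let H be the isotropy group of some point, N the normalizer of H in G, F⁰ the set of points of M whose isotropy group equals H, and F the closure of F⁰. Then F⁰ and F are N-invariant, and the induced map I : F⁰/N → M/G on quotient metric spaces is injective with image equal to the H-isotropy stratum (the set of orbits of points whose isotropy group is conjugate to H). -/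
lemma map_conj_eq_self_iff {G : Type*} [Group G] (H : Subgroup G) (g : G) :
    H.map (MulAut.conj g).toMonoidHom = H ↔ g ∈ Subgroup.normalizer (H : Set G) := by
  constructor
  · intro h
    rw [Subgroup.mem_normalizer_iff]
    intro n
    constructor
    · intro hn
      have : (MulAut.conj g) n ∈ H.map (MulAut.conj g).toMonoidHom :=
        ⟨n, hn, rfl⟩
      rw [h] at this
      simpa [MulAut.conj] using this
    · intro hn
      have : g * n * g⁻¹ ∈ H.map (MulAut.conj g).toMonoidHom := by
        rw [h]; exact hn
      obtain ⟨m, hm, hmeq⟩ := this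
      have : m = n := by
        have := hmeq
        simp only [MulEquiv.coe_toMonoidHom, MulAut.conj_apply] at this
        exact mul_left_cancel (mul_right_cancel this)
      rwa [this] at hm
  · intro hg
    ext x
    rw [Subgroup.mem_map_equiv]
    simp only [MulAut.conj_symm_apply]
    rw [Subgroup.mem_normalizer_iff''] at hg
    exact (hg x).symm

/-- Let a compact group `G` act isometrically on a complete connected metric space `M`,
let `H` be the isotropy group of a point `p₀`, `N` the normalizer of `H` in `G`, `F⁰` the
set of points of `M` whose isotropy group is exactly `H`, and `F` the closure of `F⁰`.
Then `F⁰` and `F` are `N`-invariant, the induced map `F⁰/N → M/G` is injective (two points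
of `F⁰` in the same `G`-orbit lie in the same `N`-orbit), and its image is exactly the
`H`-isotropy stratum, i.e. the set of orbits of points whose isotropy group is conjugate
to `H`. -/
theorem strata_reduction_map_injective_image_stratum
    {G M : Type*} [Group G] [TopologicalSpace G] [IsTopologicalGroup G] [CompactSpace G]
    [MetricSpace M] [CompleteSpace M] [ConnectedSpace M] [MulAction G M]
    (hiso : ∀ g : G, Isometry fun x : M => g • x)
    (hcont : Continuous fun q : G × M => q.1 • q.2)
    (p₀ : M) (H N : Subgroup G)
    (hH : H = MulAction.stabilizer G p₀) (hN : N = Subgroup.normalizer (H : Set G))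
    (F0 F : Set M)
    (hF0 : F0 = {x : M | MulAction.stabilizer G x = H}) (hF : F = closure F0) :
    (∀ g ∈ N, ∀ x ∈ F0, g • x ∈ F0) ∧
    (∀ g ∈ N, ∀ x ∈ F, g • x ∈ F) ∧
    (∀ x ∈ F0, ∀ y ∈ F0, (∃ g : G, g • x = y) → ∃ g ∈ N, g • x = y) ∧
    {y : M | ∃ x ∈ F0, ∃ g : G, g • x = y} =
      {y : M | ∃ g : G, MulAction.stabilizer G y = H.map (MulAut.conj g).toMonoidHom} := by
  subst hF0 hF hN
  have hstab : ∀ (g : G) (x : M),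
      MulAction.stabilizer G (g • x) = (MulAction.stabilizer G x).map (MulAut.conj g).toMonoidHom :=
    fun g x => MulAction.stabilizer_smul_eq_stabilizer_map_conj g x
  have hinv : ∀ g ∈ Subgroup.normalizer (H : Set G), ∀ x ∈ {x : M | MulAction.stabilizer G x = H},
      g • x ∈ {x : M | MulAction.stabilizer G x = H} := by
    intro g hg x hx
    simp only [Set.mem_setOf_eq] at hx ⊢
    rw [hstab, hx, map_conj_eq_self_iff]
    exact hg
  refine ⟨hinv, ?_, ?_, ?_⟩
  · intro g hg x hx
    have hmaps : Set.MapsTo (fun x : M => g • x) {x : M | MulAction.stabilizer G x = H}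
        {x : M | MulAction.stabilizer G x = H} := fun y hy => hinv g hg y hy
    exact (hmaps.closure (hiso g).continuous) hx
  · intro x hx y hy ⟨g, hgxy⟩
    refine ⟨g, ?_, hgxy⟩
    simp only [Set.mem_setOf_eq] at hx hy
    rw [← map_conj_eq_self_iff, ← hx, ← hstab, hgxy, hy]
    exact hx.symm
  · ext y
    simp only [Set.mem_setOf_eq]
    constructor
    · rintro ⟨x, hx, g, rfl⟩
      exact ⟨g, by rw [hstab, hx]⟩
    · rintro ⟨g, hy⟩
      refine ⟨g⁻¹ • y, ?_, g, smul_inv_smul g y⟩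
      show MulAction.stabilizer G (g⁻¹ • y) = H
      rw [hstab, hy, Subgroup.map_map]
      ext x
      simp only [Subgroup.mem_map, MonoidHom.comp_apply, MulEquiv.coe_toMonoidHom,
        MulAut.conj_apply]
      constructor
      · rintro ⟨a, ha, rfl⟩
        simpa [mul_assoc] using ha
      · intro hx
        exact ⟨x, hx, by group⟩
end
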